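/- Orthogonality of adaptive aliasing filters: for n a power of two, a subtree T of T^full_n, and two distinct leaves v, v' of T with filters Ĝ_v, Ĝ_{v'} defined by Ĝ_u(ξ) = 2^{-w_T(u)} Π_{ℓ ∈ Anc(u,T)} (1 + e^{2πi(ξ-f_u)/2^{ℓ+1}}), one has Σ_{ξ∈[n]} Ĝ_v(ξ) · conj(Ĝ_{v'}(ξ)) = 0. -/

import Mathlib

open scoped Classical

noncomputable section

/-- `T` is a subtree of the full FFT binary tree `T^full_n` of depth `m` on the universe
`[n] = [2^m]`: nodes are pairs `(j, f)` of a level `j ≤ m` and a label `f ∈ [2^j]`;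
`T` contains the root `(0, 0)` and is closed under taking parents (the parent of
`(j+1, f)` is `(j, f % 2^j)`; the right child of `(j, g)` is `(j+1, g)` and the left
child is `(j+1, g + 2^j)`). -/
def IsSubtree (m : ℕ) (T : Set (ℕ × ℕ)) : Prop :=
  (0, 0) ∈ T ∧ (∀ j f : ℕ, (j + 1, f) ∈ T → (j, f % 2 ^ j) ∈ T) ∧
    ∀ j f : ℕ, (j, f) ∈ T → j ≤ m ∧ f < 2 ^ j

/-- `(j, f)` is a leaf of `T`: it belongs to `T` and none of its two children does. -/
def IsLeaf (T : Set (ℕ × ℕ)) (j f : ℕ) : Prop :=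
  (j, f) ∈ T ∧ (j + 1, f) ∉ T ∧ (j + 1, f + 2 ^ j) ∉ T

/-- `Anc T j f`: the set of levels `ℓ < j` at which the ancestor `(ℓ, f % 2^ℓ)` of the
node `(j, f)` has two children in `T`.  Its cardinality is the weight `w_T(v)`. -/
def Anc (T : Set (ℕ × ℕ)) (j f : ℕ) : Finset ℕ :=
  (Finset.range j).filter fun ℓ =>
    (ℓ + 1, f % 2 ^ ℓ) ∈ T ∧ (ℓ + 1, f % 2 ^ ℓ + 2 ^ ℓ) ∈ T

/-- The one-dimensional adaptive aliasing `(v, T)`-isolating filter in the Fourier domain: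
`Ĝ_v(ξ) = 2^{-w_T(v)} ⬝ ∏_{ℓ ∈ Anc(v,T)} (1 + e^{2πi(ξ - f)/2^{ℓ+1}})`. -/
def filt (T : Set (ℕ × ℕ)) (j f ξ : ℕ) : ℂ :=
  (2 : ℂ) ^ (-((Anc T j f).card : ℤ)) *
    ∏ ℓ ∈ Anc T j f,
      (1 + Complex.exp (2 * (Real.pi : ℂ) * Complex.I * ((ξ : ℂ) - (f : ℂ)) / 2 ^ (ℓ + 1)))


section Stmt6Aux

private lemma prod_one_add {α : Type*} [DecidableEq α] (s : Finset α) (g : α → ℂ) :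
    ∏ i ∈ s, (1 + g i) = ∑ t ∈ s.powerset, ∏ i ∈ t, g i := by
  induction s using Finset.induction with
  | empty => simp
  | @insert a s ha ih =>
    rw [Finset.prod_insert ha, ih, Finset.sum_powerset_insert ha, add_mul, one_mul,
      Finset.mul_sum]
    congr 1
    refine Finset.sum_congr rfl fun t ht => ?_
    rw [Finset.prod_insert (fun h => ha (Finset.mem_powerset.1 ht h))]

private lemma sum_exp_int (N : ℕ) (hN : 0 < N) (k : ℤ) (hk : ¬ (N:ℤ) ∣ k) :
    ∑ ξ ∈ Finset.range N, Complex.exp (2 * (Real.pi:ℂ) * Complex.I * k * ξ / N) = 0 := by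
  have hNc : (N : ℂ) ≠ 0 := Nat.cast_ne_zero.2 hN.ne'
  have h2pi : (2 * (Real.pi:ℂ) * Complex.I) ≠ 0 := by
    simp [Real.pi_ne_zero, Complex.I_ne_zero]
  set z := Complex.exp (2 * (Real.pi:ℂ) * Complex.I * k / N) with hz
  have hzpow : ∀ ξ : ℕ, Complex.exp (2 * (Real.pi:ℂ) * Complex.I * k * ξ / N) = z ^ ξ := by
    intro ξ
    rw [hz, ← Complex.exp_nat_mul]
    congr 1
    ring
  have hzne : z ≠ 1 := by
    intro h
    rw [hz, Complex.exp_eq_one_iff] at h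
    obtain ⟨t, ht⟩ := h
    apply hk
    refine ⟨t, ?_⟩
    have hC : (k : ℂ) = N * t := by
      field_simp at ht
      have h2 : 2 * (Real.pi:ℂ) * Complex.I * (k:ℂ) = 2 * (Real.pi:ℂ) * Complex.I * ((N:ℂ) * t) := by
        rw [ht]
      exact mul_left_cancel₀ h2pi h2
    exact_mod_cast hC
  have hzN : z ^ N = 1 := by
    rw [hz, ← Complex.exp_nat_mul]
    have : (N:ℂ) * (2 * (Real.pi:ℂ) * Complex.I * k / N) = k * (2 * Real.pi * Complex.I) := by
      field_simp
    rw [this, Complex.exp_int_mul_two_pi_mul_I]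
  simp_rw [hzpow]
  rw [geom_sum_eq hzne, hzN, sub_self, zero_div]

private def DD (m : ℕ) (S : Finset ℕ) : ℕ := ∑ ℓ ∈ S, 2 ^ (m - 1 - ℓ)

private lemma sum_two_pow (m : ℕ) : ∑ i ∈ Finset.range m, 2 ^ i = 2 ^ m - 1 := by
  induction m with
  | zero => simp
  | succ n ih => rw [Finset.sum_range_succ, ih]; have := Nat.one_le_two_pow (n := n); omega

private lemma DD_lt (m : ℕ) (S : Finset ℕ) (hS : S ⊆ Finset.range m) : DD m S < 2 ^ m := by
  have h1 : DD m S ≤ ∑ ℓ ∈ Finset.range m, 2 ^ (m - 1 - ℓ) :=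
    Finset.sum_le_sum_of_subset hS
  have h2 : ∑ ℓ ∈ Finset.range m, 2 ^ (m - 1 - ℓ) = ∑ i ∈ Finset.range m, 2 ^ i :=
    Finset.sum_range_reflect (fun i => 2 ^ i) m
  have h3 := sum_two_pow m
  have := Nat.one_le_two_pow (n := m)
  omega

private lemma DD_inj (m : ℕ) (S S' : Finset ℕ) (hS : S ⊆ Finset.range m) (hS' : S' ⊆ Finset.range m)
    (h : DD m S = DD m S') : S = S' := by
  have key : ∀ (t : Finset ℕ), t ⊆ Finset.range m →
      DD m t = ∑ i ∈ t.image (fun ℓ => m - 1 - ℓ), 2 ^ i := by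
    intro t ht
    rw [Finset.sum_image (fun x hx y hy hxy => by
      have hxm := Finset.mem_range.1 (ht hx)
      have hym := Finset.mem_range.1 (ht hy)
      omega)]
    rfl
  rw [key S hS, key S' hS'] at h
  have himg := Finset.geomSum_injective (le_refl 2) h
  have hinv : ∀ (t : Finset ℕ), t ⊆ Finset.range m →
      (t.image (fun ℓ => m - 1 - ℓ)).image (fun ℓ => m - 1 - ℓ) = t := by
    intro t ht
    rw [Finset.image_image]
    ext x
    simp only [Finset.mem_image, Function.comp_apply]
    constructor
    · rintro ⟨y, hy, rfl⟩
      have hy' := Finset.mem_range.1 (ht hy)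
      have hxy : m - 1 - (m - 1 - y) = y := by omega
      rwa [hxy]
    · intro hx
      refine ⟨x, hx, ?_⟩
      have := Finset.mem_range.1 (ht hx)
      omega
  rw [← hinv S hS, ← hinv S' hS', himg]

private lemma prod_exp (m : ℕ) (S : Finset ℕ) (hS : S ⊆ Finset.range m) (a : ℂ) :
    ∏ ℓ ∈ S, Complex.exp (a / 2 ^ (ℓ + 1)) = Complex.exp (a * (DD m S) / 2 ^ m) := by
  rw [← Complex.exp_sum]
  congr 1
  have key : ∀ ℓ ∈ S, a / 2 ^ (ℓ + 1) = a * ((2 ^ (m - 1 - ℓ) : ℕ) : ℂ) / 2 ^ m := by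
    intro ℓ hℓ
    have hℓm := Finset.mem_range.1 (hS hℓ)
    have hpow : (2:ℂ) ^ (m - 1 - ℓ) * 2 ^ (ℓ + 1) = 2 ^ m := by
      rw [← pow_add]; congr 1; omega
    push_cast
    rw [div_eq_div_iff (pow_ne_zero _ two_ne_zero) (pow_ne_zero _ two_ne_zero), ← hpow]
    ring
  rw [Finset.sum_congr rfl key, ← Finset.sum_div, ← Finset.mul_sum]
  congr 2
  push_cast [DD]
  ring

private lemma chain_mem {m : ℕ} {T : Set (ℕ × ℕ)} (hT : IsSubtree m T) :
    ∀ j f ℓ, (j, f) ∈ T → ℓ ≤ j → (ℓ, f % 2 ^ ℓ) ∈ T := by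
  intro j
  induction j with
  | zero =>
    intro f ℓ hf hℓ
    interval_cases ℓ
    have := (hT.2.2 0 f hf).2
    simpa [Nat.lt_one_iff.1 this] using hf
  | succ n ih =>
    intro f ℓ hf hℓ
    rcases Nat.lt_or_ge ℓ (n + 1) with h | h
    · have hpar := hT.2.1 n f hf
      have := ih (f % 2 ^ n) ℓ hpar (by omega)
      rwa [Nat.mod_mod_of_dvd _ (pow_dvd_pow 2 (by omega))] at this
    · have hℓeq : ℓ = n + 1 := by omega
      subst hℓeq
      have := (hT.2.2 _ f hf).2
      rwa [Nat.mod_eq_of_lt this]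

private lemma leaf_ne_aux {m : ℕ} {T : Set (ℕ × ℕ)} (hT : IsSubtree m T) {j f j' f' : ℕ}
    (hleaf : IsLeaf T j f) (h' : (j', f') ∈ T) (hjj' : j ≤ j')
    (hmod : f % 2 ^ j = f' % 2 ^ j) (hne : (j, f) ≠ (j', f')) : False := by
  have hflt : f < 2 ^ j := (hT.2.2 _ _ hleaf.1).2
  have hfeq : f = f' % 2 ^ j := by rwa [Nat.mod_eq_of_lt hflt] at hmod
  rcases Nat.lt_or_ge j j' with h | h
  · have hchild : (j + 1, f' % 2 ^ (j + 1)) ∈ T := chain_mem hT j' f' (j + 1) h' (by omega)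
    have hsplit : f' % 2 ^ (j + 1) = f' % 2 ^ j + 2 ^ j * (f' / 2 ^ j % 2) := by
      rw [pow_succ, Nat.mod_mul]
    have hb : f' / 2 ^ j % 2 = 0 ∨ f' / 2 ^ j % 2 = 1 := by omega
    rcases hb with hb | hb
    · rw [hsplit, hb, Nat.mul_zero, Nat.add_zero, ← hfeq] at hchild
      exact hleaf.2.1 hchild
    · rw [hsplit, hb, Nat.mul_one, ← hfeq] at hchild
      exact hleaf.2.2 hchild
  · have hjeq : j = j' := by omega
    subst hjeq
    have hf'lt : f' < 2 ^ j := (hT.2.2 _ _ h').2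
    rw [Nat.mod_eq_of_lt hf'lt] at hfeq
    exact hne (by rw [hfeq])

private lemma exists_split {m : ℕ} {T : Set (ℕ × ℕ)} (hT : IsSubtree m T) {j f j' f' : ℕ}
    (hleaf : IsLeaf T j f) (hleaf' : IsLeaf T j' f') (hne : (j, f) ≠ (j', f')) :
    ∃ ℓ, ℓ ∈ Anc T j f ∧ ℓ ∈ Anc T j' f' ∧ ∃ t : ℤ, (f' : ℤ) - f = 2 ^ ℓ * (2 * t + 1) := by
  classical
  obtain ⟨L, hLj, hLj', hLne⟩ : ∃ L, L ≤ j ∧ L ≤ j' ∧ f % 2 ^ L ≠ f' % 2 ^ L := by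
    rcases Nat.le_total j j' with h | h
    · exact ⟨j, le_refl _, h, fun hmod => leaf_ne_aux hT hleaf hleaf'.1 h hmod hne⟩
    · exact ⟨j', h, le_refl _, fun hmod =>
        leaf_ne_aux hT hleaf' hleaf.1 h hmod.symm (Ne.symm hne)⟩
  have hL1 : 1 ≤ L := by
    rcases Nat.eq_zero_or_pos L with h0 | h0
    · exfalso; apply hLne; rw [h0]; omega
    · exact h0
  have hPex : ∃ ℓ, f % 2 ^ (ℓ + 1) ≠ f' % 2 ^ (ℓ + 1) := ⟨L - 1, by
    have hh : L - 1 + 1 = L := by omega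
    rw [hh]; exact hLne⟩
  set ℓ := Nat.find hPex with hℓdef
  have hPℓ : f % 2 ^ (ℓ + 1) ≠ f' % 2 ^ (ℓ + 1) := Nat.find_spec hPex
  have hℓlt : ℓ < L := by
    have hfm : ℓ ≤ L - 1 := Nat.find_min' hPex (by
      have hh : L - 1 + 1 = L := by omega
      rw [hh]; exact hLne)
    omega
  have hℓj : ℓ < j := by omega
  have hℓj' : ℓ < j' := by omega
  have hlow : f % 2 ^ ℓ = f' % 2 ^ ℓ := by
    rcases Nat.eq_zero_or_pos ℓ with h0 | h0
    · rw [h0]; simp [Nat.mod_one]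
    · have hm := Nat.find_min hPex (m := ℓ - 1) (by omega)
      push_neg at hm
      have heq : ℓ - 1 + 1 = ℓ := by omega
      rwa [heq] at hm
  set c := f % 2 ^ ℓ with hcdef
  set b := f / 2 ^ ℓ % 2 with hbdef
  set b' := f' / 2 ^ ℓ % 2 with hb'def
  have hsplit : f % 2 ^ (ℓ + 1) = c + 2 ^ ℓ * b := by
    rw [pow_succ, Nat.mod_mul]
  have hsplit' : f' % 2 ^ (ℓ + 1) = c + 2 ^ ℓ * b' := by
    rw [pow_succ, Nat.mod_mul, ← hlow]
  have hbne : b ≠ b' := fun h => hPℓ (by rw [hsplit, hsplit', h])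
  have hb2 : b < 2 := Nat.mod_lt _ (by omega)
  have hb'2 : b' < 2 := Nat.mod_lt _ (by omega)
  have hc1 : (ℓ + 1, c + 2 ^ ℓ * b) ∈ T := by
    rw [← hsplit]; exact chain_mem hT j f (ℓ + 1) hleaf.1 (by omega)
  have hc2 : (ℓ + 1, c + 2 ^ ℓ * b') ∈ T := by
    rw [← hsplit']; exact chain_mem hT j' f' (ℓ + 1) hleaf'.1 (by omega)
  have hboth : (ℓ + 1, c) ∈ T ∧ (ℓ + 1, c + 2 ^ ℓ) ∈ T := by
    rcases (by omega : (b = 0 ∧ b' = 1) ∨ (b = 1 ∧ b' = 0)) with ⟨h1, h2⟩ | ⟨h1, h2⟩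
    · rw [h1, Nat.mul_zero, Nat.add_zero] at hc1
      rw [h2, Nat.mul_one] at hc2
      exact ⟨hc1, hc2⟩
    · rw [h2, Nat.mul_zero, Nat.add_zero] at hc2
      rw [h1, Nat.mul_one] at hc1
      exact ⟨hc2, hc1⟩
  have hmemA : ℓ ∈ Anc T j f := by
    simp only [Anc, Finset.mem_filter, Finset.mem_range]
    exact ⟨hℓj, hboth.1, hboth.2⟩
  have hmemA' : ℓ ∈ Anc T j' f' := by
    simp only [Anc, Finset.mem_filter, Finset.mem_range, ← hlow]
    exact ⟨hℓj', hboth.1, hboth.2⟩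
  refine ⟨ℓ, hmemA, hmemA', ?_⟩
  set q := f / 2 ^ (ℓ + 1) with hqdef
  set q' := f' / 2 ^ (ℓ + 1) with hq'def
  have hfd : f = 2 ^ (ℓ + 1) * q + c + 2 ^ ℓ * b := by
    conv_lhs => rw [← Nat.div_add_mod f (2 ^ (ℓ + 1))]
    rw [hsplit]; ring
  have hfd' : f' = 2 ^ (ℓ + 1) * q' + c + 2 ^ ℓ * b' := by
    conv_lhs => rw [← Nat.div_add_mod f' (2 ^ (ℓ + 1))]
    rw [hsplit']; ring
  have hZ : (f : ℤ) = 2 ^ (ℓ + 1) * (q : ℤ) + (c : ℤ) + 2 ^ ℓ * (b : ℤ) := by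
    exact_mod_cast hfd
  have hZ' : (f' : ℤ) = 2 ^ (ℓ + 1) * (q' : ℤ) + (c : ℤ) + 2 ^ ℓ * (b' : ℤ) := by
    exact_mod_cast hfd'
  rcases (by omega : (b = 0 ∧ b' = 1) ∨ (b = 1 ∧ b' = 0)) with ⟨h1, h2⟩ | ⟨h1, h2⟩
  · refine ⟨(q' : ℤ) - q, ?_⟩
    rw [hZ, hZ', h1, h2]
    push_cast
    ring
  · refine ⟨(q' : ℤ) - q - 1, ?_⟩
    rw [hZ, hZ', h1, h2]
    push_cast
    ring

private lemma innerSumExp (m : ℕ) (f f' : ℕ) (S S' : Finset ℕ)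
    (hS : S ⊆ Finset.range m) (hS' : S' ⊆ Finset.range m) :
    ∑ ξ ∈ Finset.range (2 ^ m),
        Complex.exp (2 * (Real.pi:ℂ) * Complex.I * ((ξ:ℂ) - (f:ℂ)) * (DD m S) / 2 ^ m) *
          Complex.exp (-(2 * (Real.pi:ℂ) * Complex.I * ((ξ:ℂ) - (f':ℂ))) * (DD m S') / 2 ^ m) =
      if S' = S then
        (2 ^ m : ℂ) * Complex.exp (2 * (Real.pi:ℂ) * Complex.I * ((f':ℂ) - (f:ℂ)) * (DD m S) / 2 ^ m)
      else 0 := by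
  have h2m : ((2:ℂ) ^ m) ≠ 0 := pow_ne_zero _ two_ne_zero
  by_cases hSS : S' = S
  · subst hSS
    rw [if_pos rfl]
    have hterm : ∀ ξ ∈ Finset.range (2 ^ m),
        Complex.exp (2 * (Real.pi:ℂ) * Complex.I * ((ξ:ℂ) - (f:ℂ)) * (DD m S') / 2 ^ m) *
          Complex.exp (-(2 * (Real.pi:ℂ) * Complex.I * ((ξ:ℂ) - (f':ℂ))) * (DD m S') / 2 ^ m) =
        Complex.exp (2 * (Real.pi:ℂ) * Complex.I * ((f':ℂ) - (f:ℂ)) * (DD m S') / 2 ^ m) := by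
      intro ξ _
      rw [← Complex.exp_add]
      congr 1
      field_simp
      ring
    rw [Finset.sum_congr rfl hterm, Finset.sum_const, Finset.card_range, nsmul_eq_mul]
    push_cast
    ring
  · rw [if_neg hSS]
    set k : ℤ := (DD m S : ℤ) - (DD m S' : ℤ) with hk
    have hknz : k ≠ 0 := by
      intro h
      rw [hk, sub_eq_zero] at h
      exact hSS (DD_inj m S' S hS' hS (by exact_mod_cast h.symm))
    have hndvd : ¬ ((2 ^ m : ℕ) : ℤ) ∣ k := by
      intro hdvd
      apply hknz
      refine Int.eq_zero_of_abs_lt_dvd hdvd ?_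
      have h1 : (DD m S : ℤ) < 2 ^ m := by exact_mod_cast DD_lt m S hS
      have h2 : (DD m S' : ℤ) < 2 ^ m := by exact_mod_cast DD_lt m S' hS'
      have h3 : (0:ℤ) ≤ (DD m S : ℤ) := Int.natCast_nonneg _
      have h4 : (0:ℤ) ≤ (DD m S' : ℤ) := Int.natCast_nonneg _
      have h5 : ((2 ^ m : ℕ) : ℤ) = 2 ^ m := by push_cast; rfl
      rw [abs_lt, hk, h5]
      constructor <;> linarith
    have hterm : ∀ ξ ∈ Finset.range (2 ^ m),
        Complex.exp (2 * (Real.pi:ℂ) * Complex.I * ((ξ:ℂ) - (f:ℂ)) * (DD m S) / 2 ^ m) *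
          Complex.exp (-(2 * (Real.pi:ℂ) * Complex.I * ((ξ:ℂ) - (f':ℂ))) * (DD m S') / 2 ^ m) =
        Complex.exp (2 * (Real.pi:ℂ) * Complex.I * (k:ℂ) * (ξ:ℂ) / (2^m : ℕ)) *
          Complex.exp (2 * (Real.pi:ℂ) * Complex.I * ((f':ℂ) * (DD m S') - (f:ℂ) * (DD m S)) / 2 ^ m) := by
      intro ξ _
      rw [← Complex.exp_add, ← Complex.exp_add]
      congr 1
      rw [hk]
      push_cast
      field_simp
      ring
    rw [Finset.sum_congr rfl hterm, ← Finset.sum_mul,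
      sum_exp_int (2 ^ m) (pow_pos (by norm_num) m) k hndvd, zero_mul]

end Stmt6Aux

/-- Orthogonality of adaptive aliasing filters: for `n = 2^m` a power of two, a subtree `T`
of `T^full_n` and two distinct leaves `v = (j, f)` and `v' = (j', f')` of `T`,
`∑_{ξ ∈ [n]} Ĝ_v(ξ) ⬝ conj(Ĝ_{v'}(ξ)) = 0`. -/
theorem stmt_6 (m : ℕ) (T : Set (ℕ × ℕ)) (hT : IsSubtree m T) (j f j' f' : ℕ)
    (hleaf : IsLeaf T j f) (hleaf' : IsLeaf T j' f')
    (hne : (j, f) ≠ (j', f')) :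
    ∑ ξ ∈ Finset.range (2 ^ m), filt T j f ξ * (starRingEnd ℂ) (filt T j' f' ξ) = 0 := by
  classical
  set A := Anc T j f with hA
  set A' := Anc T j' f' with hA'
  have hjm : j ≤ m := (hT.2.2 _ _ hleaf.1).1
  have hj'm : j' ≤ m := (hT.2.2 _ _ hleaf'.1).1
  have hAr : A ⊆ Finset.range m := fun ℓ hℓ => Finset.mem_range.2
    (lt_of_lt_of_le (Finset.mem_range.1 (Finset.mem_filter.1 hℓ).1) hjm)
  have hA'r : A' ⊆ Finset.range m := fun ℓ hℓ => Finset.mem_range.2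
    (lt_of_lt_of_le (Finset.mem_range.1 (Finset.mem_filter.1 hℓ).1) hj'm)
  obtain ⟨ℓ₀, hℓA, hℓA', t, ht⟩ := exists_split hT hleaf hleaf' hne
  -- expand filt v
  have hfilt : ∀ ξ : ℕ, filt T j f ξ = (2:ℂ) ^ (-(A.card : ℤ)) *
      ∑ S ∈ A.powerset,
        Complex.exp (2 * (Real.pi:ℂ) * Complex.I * ((ξ:ℂ) - (f:ℂ)) * (DD m S) / 2 ^ m) := by
    intro ξ
    rw [filt, prod_one_add]
    congr 1
    exact Finset.sum_congr rfl fun S hS =>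
      prod_exp m S ((Finset.mem_powerset.1 hS).trans hAr) _
  -- expand conj (filt v')
  have hconj : ∀ ξ : ℕ, (starRingEnd ℂ) (filt T j' f' ξ) = (2:ℂ) ^ (-(A'.card : ℤ)) *
      ∑ S' ∈ A'.powerset,
        Complex.exp (-(2 * (Real.pi:ℂ) * Complex.I * ((ξ:ℂ) - (f':ℂ))) * (DD m S') / 2 ^ m) := by
    intro ξ
    rw [filt, map_mul, map_zpow₀, map_ofNat, map_prod]
    have hcp : ∀ ℓ ∈ A', (starRingEnd ℂ)
        (1 + Complex.exp (2 * (Real.pi : ℂ) * Complex.I * ((ξ : ℂ) - (f' : ℂ)) / 2 ^ (ℓ + 1))) =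
        1 + Complex.exp ((-(2 * (Real.pi:ℂ) * Complex.I * ((ξ:ℂ) - (f':ℂ)))) / 2 ^ (ℓ + 1)) := by
      intro ℓ _
      rw [map_add, map_one, ← Complex.exp_conj]
      congr 2
      simp only [map_div₀, map_mul, map_sub, Complex.conj_I, Complex.conj_ofReal,
        map_pow, map_ofNat, map_natCast]
      ring
    rw [Finset.prod_congr rfl hcp, prod_one_add]
    congr 1
    exact Finset.sum_congr rfl fun S hS =>
      prod_exp m S ((Finset.mem_powerset.1 hS).trans hA'r) _
  simp only [hfilt, hconj]
  -- pull out constants and exchange sums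
  have step1 : ∑ ξ ∈ Finset.range (2 ^ m),
      ((2:ℂ) ^ (-(A.card : ℤ)) * ∑ S ∈ A.powerset,
        Complex.exp (2 * (Real.pi:ℂ) * Complex.I * ((ξ:ℂ) - (f:ℂ)) * (DD m S) / 2 ^ m)) *
      ((2:ℂ) ^ (-(A'.card : ℤ)) * ∑ S' ∈ A'.powerset,
        Complex.exp (-(2 * (Real.pi:ℂ) * Complex.I * ((ξ:ℂ) - (f':ℂ))) * (DD m S') / 2 ^ m)) =
      (2:ℂ) ^ (-(A.card : ℤ)) * (2:ℂ) ^ (-(A'.card : ℤ)) *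
      ∑ S ∈ A.powerset, ∑ S' ∈ A'.powerset, ∑ ξ ∈ Finset.range (2 ^ m),
        Complex.exp (2 * (Real.pi:ℂ) * Complex.I * ((ξ:ℂ) - (f:ℂ)) * (DD m S) / 2 ^ m) *
          Complex.exp (-(2 * (Real.pi:ℂ) * Complex.I * ((ξ:ℂ) - (f':ℂ))) * (DD m S') / 2 ^ m) := by
    rw [Finset.sum_congr rfl fun (ξ : ℕ) _ => by
      rw [mul_mul_mul_comm, Finset.sum_mul_sum], ← Finset.mul_sum]
    congr 1
    rw [Finset.sum_comm]
    exact Finset.sum_congr rfl fun S _ => Finset.sum_comm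
  rw [step1]
  -- evaluate inner sums
  have step2 : ∀ S ∈ A.powerset, ∑ S' ∈ A'.powerset, ∑ ξ ∈ Finset.range (2 ^ m),
        Complex.exp (2 * (Real.pi:ℂ) * Complex.I * ((ξ:ℂ) - (f:ℂ)) * (DD m S) / 2 ^ m) *
          Complex.exp (-(2 * (Real.pi:ℂ) * Complex.I * ((ξ:ℂ) - (f':ℂ))) * (DD m S') / 2 ^ m) =
      if S ∈ A'.powerset then
        (2 ^ m : ℂ) * Complex.exp (2 * (Real.pi:ℂ) * Complex.I * ((f':ℂ) - (f:ℂ)) * (DD m S) / 2 ^ m)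
      else 0 := by
    intro S hS
    rw [Finset.sum_congr rfl fun S' hS' => innerSumExp m f f' S S'
      ((Finset.mem_powerset.1 hS).trans hAr) ((Finset.mem_powerset.1 hS').trans hA'r)]
    exact Finset.sum_ite_eq' A'.powerset S _
  rw [Finset.sum_congr rfl step2, Finset.sum_ite_mem]
  have hpows : A.powerset ∩ A'.powerset = (A ∩ A').powerset := by
    ext S
    simp only [Finset.mem_inter, Finset.mem_powerset, Finset.subset_inter_iff]
  rw [hpows, ← Finset.mul_sum]
  -- reconstitute the product over A ∩ A'
  have hAA : A ∩ A' ⊆ Finset.range m := fun ℓ hℓ => hAr (Finset.mem_inter.1 hℓ).1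
  have step3 : ∑ S ∈ (A ∩ A').powerset,
      Complex.exp (2 * (Real.pi:ℂ) * Complex.I * ((f':ℂ) - (f:ℂ)) * (DD m S) / 2 ^ m) =
      ∏ ℓ ∈ A ∩ A',
        (1 + Complex.exp ((2 * (Real.pi:ℂ) * Complex.I * ((f':ℂ) - (f:ℂ))) / 2 ^ (ℓ + 1))) := by
    rw [prod_one_add]
    exact (Finset.sum_congr rfl fun S hS =>
      prod_exp m S ((Finset.mem_powerset.1 hS).trans hAA) _).symm
  rw [step3]
  -- the factor at ℓ₀ vanishes
  have hfac : (1 : ℂ) + Complex.exp ((2 * (Real.pi:ℂ) * Complex.I * ((f':ℂ) - (f:ℂ))) / 2 ^ (ℓ₀ + 1)) = 0 := by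
    have hc : ((f' : ℂ) - (f : ℂ)) = 2 ^ ℓ₀ * (2 * (t : ℂ) + 1) := by exact_mod_cast ht
    have harg : (2 * (Real.pi:ℂ) * Complex.I * ((f':ℂ) - (f:ℂ))) / 2 ^ (ℓ₀ + 1) =
        (t : ℂ) * (2 * (Real.pi:ℂ) * Complex.I) + (Real.pi:ℂ) * Complex.I := by
      rw [hc, pow_succ]
      have h2 : ((2:ℂ) ^ ℓ₀) ≠ 0 := pow_ne_zero _ two_ne_zero
      field_simp
    rw [harg, Complex.exp_add, Complex.exp_int_mul_two_pi_mul_I, one_mul,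
      Complex.exp_pi_mul_I]
    ring
  rw [Finset.prod_eq_zero (Finset.mem_inter.2 ⟨hℓA, hℓA'⟩) hfac]
  ring
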